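/- Let (X,d) be a bounded metric space with X = X₁ ∪ X₂ ∪ {x₀}, where X₁, X₂, {x₀} are pairwise disjoint and {x₀} = closure(X₁) ∩ closure(X₂). Then X satisfies property C₀ (i.e., d(x,x₀) ≤ c[d(x,X₁) + d(x,X₂)] for some constant c and every x ∈ X) if and only if there exists a constant c̄ > 0 such that for every i ≠ j and every x ∈ X_i one has B(x, c̄·d(x,x₀)) ∩ X_j = ∅. -/
import Mathlib


open Metric

/-- given `X = X₁ ∪ X₂ ∪ {x₀}` with `{x₀} = closure X₁ ∩ closure X₂`, the
distance condition of property `C₀` holds iff there is `c̄ > 0` such that for `i ≠ j`,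
`B(x, c̄ d(x,x₀)) ∩ X_j = ∅` for every `x ∈ X_i`. -/
theorem propertyC0_iff_ball_separation {X : Type*} [MetricSpace X]
    (X₁ X₂ : Set X) (x₀ : X)
    (hcover : X₁ ∪ X₂ ∪ {x₀} = Set.univ)
    (hdisj : Disjoint X₁ X₂) (hx₀₁ : x₀ ∉ X₁) (hx₀₂ : x₀ ∉ X₂)
    (hbdd : Bornology.IsBounded (Set.univ : Set X))
    (hclos : closure X₁ ∩ closure X₂ = {x₀}) :
    (∃ c : ℝ, ∀ x : X, dist x x₀ ≤ c * (infDist x X₁ + infDist x X₂)) ↔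
    (∃ cb : ℝ, 0 < cb ∧
      (∀ x ∈ X₁, ball x (cb * dist x x₀) ∩ X₂ = ∅) ∧
      (∀ x ∈ X₂, ball x (cb * dist x x₀) ∩ X₁ = ∅)) := by
  have hx₀cl : x₀ ∈ closure X₁ ∩ closure X₂ := by rw [hclos]; exact rfl
  have hne₁ : X₁.Nonempty := closure_nonempty_iff.mp ⟨x₀, hx₀cl.1⟩
  have hne₂ : X₂.Nonempty := closure_nonempty_iff.mp ⟨x₀, hx₀cl.2⟩
  constructor
  · rintro ⟨c, hc⟩
    -- c must be positive
    have hcpos : 0 < c := by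
      by_contra h
      push_neg at h
      obtain ⟨x, hx⟩ := hne₁
      have h1 : dist x x₀ ≤ c * (infDist x X₁ + infDist x X₂) := hc x
      have h2 : c * (infDist x X₁ + infDist x X₂) ≤ 0 :=
        mul_nonpos_of_nonpos_of_nonneg h
          (add_nonneg infDist_nonneg infDist_nonneg)
      have : x = x₀ := by
        have := dist_nonneg (x := x) (y := x₀)
        have : dist x x₀ = 0 := le_antisymm (h1.trans h2) this
        exact dist_eq_zero.mp this
      exact hx₀₁ (this ▸ hx)
    refine ⟨1 / c, by positivity, ?_, ?_⟩
    · intro x hx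
      ext y
      simp only [Set.mem_inter_iff, mem_ball, Set.mem_empty_iff_false, iff_false, not_and]
      intro hy hy2
      have h0 : infDist x X₁ = 0 := infDist_zero_of_mem hx
      have h1 : infDist x X₂ ≤ dist x y := infDist_le_dist_of_mem hy2
      have h2 : dist x x₀ ≤ c * infDist x X₂ := by
        have := hc x; rwa [h0, zero_add] at this
      have h3 : dist x x₀ ≤ c * dist x y := h2.trans (by nlinarith)
      have hy' : dist x y * c < dist x x₀ := by
        rwa [one_div, inv_mul_eq_div, lt_div_iff₀ hcpos, dist_comm y x] at hy
      nlinarith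
    · intro x hx
      ext y
      simp only [Set.mem_inter_iff, mem_ball, Set.mem_empty_iff_false, iff_false, not_and]
      intro hy hy1
      have h0 : infDist x X₂ = 0 := infDist_zero_of_mem hx
      have h1 : infDist x X₁ ≤ dist x y := infDist_le_dist_of_mem hy1
      have h2 : dist x x₀ ≤ c * infDist x X₁ := by
        have := hc x; rwa [h0, add_zero] at this
      have h3 : dist x x₀ ≤ c * dist x y := h2.trans (by nlinarith)
      have hy' : dist x y * c < dist x x₀ := by
        rwa [one_div, inv_mul_eq_div, lt_div_iff₀ hcpos, dist_comm y x] at hy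
      nlinarith
  · rintro ⟨cb, hcb, h12, h21⟩
    refine ⟨1 / cb, fun x => ?_⟩
    have hx : x ∈ X₁ ∪ X₂ ∪ {x₀} := hcover ▸ Set.mem_univ x
    rcases hx with (hx | hx) | hx
    · have h0 : infDist x X₁ = 0 := infDist_zero_of_mem hx
      have h1 : cb * dist x x₀ ≤ infDist x X₂ := by
        by_contra h
        push_neg at h
        obtain ⟨y, hy, h⟩ := (infDist_lt_iff hne₂).mp h
        have : y ∈ ball x (cb * dist x x₀) ∩ X₂ := ⟨by rwa [mem_ball, dist_comm], hy⟩
        rw [h12 x hx] at this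
        exact this
      rw [h0, zero_add]
      rw [div_mul_eq_mul_div, le_div_iff₀ hcb]
      nlinarith
    · have h0 : infDist x X₂ = 0 := infDist_zero_of_mem hx
      have h1 : cb * dist x x₀ ≤ infDist x X₁ := by
        by_contra h
        push_neg at h
        obtain ⟨y, hy, h⟩ := (infDist_lt_iff hne₁).mp h
        have : y ∈ ball x (cb * dist x x₀) ∩ X₁ := ⟨by rwa [mem_ball, dist_comm], hy⟩
        rw [h21 x hx] at this
        exact this
      rw [h0, add_zero]
      rw [div_mul_eq_mul_div, le_div_iff₀ hcb]
      nlinarith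
    · simp only [Set.mem_singleton_iff] at hx
      subst hx
      simp only [dist_self]
      have : (0:ℝ) ≤ infDist x X₁ + infDist x X₂ :=
        add_nonneg infDist_nonneg infDist_nonneg
      have hcb' : (0:ℝ) ≤ 1 / cb := by positivity
      exact mul_nonneg hcb' this
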